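/- The packing chromatic number of the corona C_n ⊙ K_1 equals 4 if n ∈ {3,4}, and equals 5 if n ≥ 5. -/

import Mathlib

open SimpleGraph

/-- A packing `k`-coloring of a graph: colors in `{1,…,k}`, and distinct vertices
with the same color `i` are at distance greater than `i`. -/
def IsPackingColoring {V : Type*} (G : SimpleGraph V) (k : ℕ) (c : V → ℕ) : Prop :=
  (∀ v, 1 ≤ c v ∧ c v ≤ k) ∧
  ∀ u v : V, u ≠ v → c u = c v → (c u : ℕ∞) < G.edist u v

/-- The packing chromatic number. -/
noncomputable def packingChromaticNumber {V : Type*} (G : SimpleGraph V) : ℕ :=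
  sInf {k | ∃ c, IsPackingColoring G k c}

/-- The generalized corona `G ⊙ pK₁`: add `p` pendant neighbors to each vertex. -/
def genCorona {V : Type*} (G : SimpleGraph V) (p : ℕ) : SimpleGraph (V ⊕ V × Fin p) where
  Adj x y :=
    (∃ u v, x = Sum.inl u ∧ y = Sum.inl v ∧ G.Adj u v) ∨
    (∃ u j, x = Sum.inl u ∧ y = Sum.inr (u, j)) ∨
    (∃ u j, x = Sum.inr (u, j) ∧ y = Sum.inl u)
  symm := by
    constructor
    rintro x y (⟨u, v, rfl, rfl, h⟩ | ⟨u, j, rfl, rfl⟩ | ⟨u, j, rfl, rfl⟩)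
    · exact Or.inl ⟨v, u, rfl, rfl, h.symm⟩
    · exact Or.inr (Or.inr ⟨u, j, rfl, rfl⟩)
    · exact Or.inr (Or.inl ⟨u, j, rfl, rfl⟩)
  loopless := by
    constructor
    rintro x (⟨u, v, rfl, h1, h⟩ | ⟨u, j, rfl, h1⟩ | ⟨u, j, rfl, h1⟩)
    · cases h1; exact G.ne_of_adj h rfl
    · exact absurd h1 (by simp)
    · exact absurd h1 (by simp)

/-- `A` is an orientation of `G`: each edge gets exactly one direction. -/
def IsOrientation {V : Type*} (G : SimpleGraph V) (A : V → V → Prop) : Prop :=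
  (∀ u v, A u v → ¬ A v u) ∧ (∀ u v, G.Adj u v ↔ (A u v ∨ A v u))

/-- Existence of a directed path of length `n` from `u` to `v`. -/
def DPath {V : Type*} (A : V → V → Prop) : ℕ → V → V → Prop
  | 0, u, v => u = v
  | (n+1), u, v => ∃ w, A u w ∧ DPath A n w v

/-- The weak directed distance: length of a shortest directed path joining `u` and `v`
in either direction. -/
noncomputable def wdist {V : Type*} (A : V → V → Prop) (u v : V) : ℕ∞ :=
  sInf {m : ℕ∞ | ∃ n : ℕ, m = n ∧ (DPath A n u v ∨ DPath A n v u)}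

/-- A packing `k`-coloring of a digraph, w.r.t. the weak directed distance. -/
def IsDPackingColoring {V : Type*} (A : V → V → Prop) (k : ℕ) (c : V → ℕ) : Prop :=
  (∀ v, 1 ≤ c v ∧ c v ≤ k) ∧
  ∀ u v : V, u ≠ v → c u = c v → (c u : ℕ∞) < wdist A u v

/-- The packing chromatic number of a digraph. -/
noncomputable def dPackingChromaticNumber {V : Type*} (A : V → V → Prop) : ℕ :=
  sInf {k | ∃ c, IsDPackingColoring A k c}

/-- A source: no incoming arcs. -/
def IsSource {V : Type*} (A : V → V → Prop) (v : V) : Prop := ∀ u, ¬ A u v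

/-- A sink: no outgoing arcs. -/
def IsSink {V : Type*} (A : V → V → Prop) (v : V) : Prop := ∀ u, ¬ A v u

-- abbreviations
abbrev CV (n : ℕ) := Fin n ⊕ Fin n × Fin 1
def GG (n : ℕ) : SimpleGraph (CV n) := genCorona (cycleGraph n) 1

def ddist {n : ℕ} (i j : Fin n) : ℕ := min (j - i).val (i - j).val

def DD {n : ℕ} : CV n → CV n → ℕ
  | Sum.inl i, Sum.inl j => ddist i j
  | Sum.inl i, Sum.inr (j, _) => ddist i j + 1
  | Sum.inr (i, _), Sum.inl j => ddist i j + 1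
  | Sum.inr (i, _), Sum.inr (j, _) => if i = j then 0 else ddist i j + 2

lemma ddist_comm {n : ℕ} (i j : Fin n) : ddist i j = ddist j i := min_comm _ _

lemma ddist_self {n : ℕ} (i : Fin n) : ddist i i = 0 := by
  have h : (i - i).val = 0 := by
    rw [Fin.sub_def]
    have := i.isLt
    have h2 : i.val + (n - i.val) = n := by omega
    simp [h2]
  simp [ddist, h]

section upper
variable {n : ℕ} (hn : 3 ≤ n)
include hn

open Fin.CommRing in
lemma adj_succ (x : Fin n) : haveI : NeZero n := ⟨by omega⟩
    (cycleGraph n).Adj x (x + 1) := by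
  haveI : NeZero n := ⟨by omega⟩
  rw [cycleGraph_adj']
  right
  have h1 : x + 1 - x = 1 := by ring
  rw [h1]
  rw [Fin.val_one' n]
  exact Nat.mod_eq_of_lt (by omega)

omit hn in
lemma GG_adj_cyc {x y : Fin n} (h : (cycleGraph n).Adj x y) : (GG n).Adj (Sum.inl x) (Sum.inl y) :=
  Or.inl ⟨x, y, rfl, rfl, h⟩

omit hn in
lemma GG_adj_pen (x : Fin n) (a : Fin 1) : (GG n).Adj (Sum.inl x) (Sum.inr (x, a)) :=
  Or.inr (Or.inl ⟨x, a, rfl, rfl⟩)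

open Fin.CommRing in
lemma edist_chain (i : Fin n) (m : ℕ) :
    haveI : NeZero n := ⟨by omega⟩
    (GG n).edist (Sum.inl i) (Sum.inl (i + (m : Fin n))) ≤ (m : ℕ∞) := by
  haveI : NeZero n := ⟨by omega⟩
  induction m with
  | zero => simp
  | succ m ih =>
    have tri : (GG n).edist (Sum.inl i) (Sum.inl (i + ((m : ℕ) + 1 : ℕ)))
        ≤ (GG n).edist (Sum.inl i) (Sum.inl (i + (m : Fin n)))
          + (GG n).edist (Sum.inl (i + (m : Fin n))) (Sum.inl (i + ((m : ℕ) + 1 : ℕ))) :=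
      SimpleGraph.edist_triangle
    have hadj : (GG n).Adj (Sum.inl (i + (m : Fin n))) (Sum.inl (i + ((m : ℕ) + 1 : ℕ))) := by
      apply GG_adj_cyc
      have : ((((m : ℕ) + 1 : ℕ)) : Fin n) = (m : Fin n) + 1 := by push_cast; ring
      rw [this, ← add_assoc]
      exact adj_succ hn _
    have h1 : (GG n).edist (Sum.inl (i + (m : Fin n))) (Sum.inl (i + ((m : ℕ) + 1 : ℕ))) = 1 :=
      edist_eq_one_iff_adj.mpr hadj
    calc (GG n).edist (Sum.inl i) (Sum.inl (i + ((m : ℕ) + 1 : ℕ)))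
        ≤ _ := tri
      _ ≤ (m : ℕ∞) + 1 := by rw [h1]; exact add_le_add_left ih 1
      _ = ((m + 1 : ℕ) : ℕ∞) := by push_cast; ring

lemma edist_inl_inl (i j : Fin n) :
    (GG n).edist (Sum.inl i) (Sum.inl j) ≤ (ddist i j : ℕ∞) := by
  haveI : NeZero n := ⟨by omega⟩
  have h1 : (GG n).edist (Sum.inl i) (Sum.inl j) ≤ ((j - i).val : ℕ∞) := by
    have := edist_chain hn i (j - i).val
    rwa [Fin.cast_val_eq_self, add_sub_cancel] at this
  have h2 : (GG n).edist (Sum.inl i) (Sum.inl j) ≤ ((i - j).val : ℕ∞) := by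
    have := edist_chain hn j (i - j).val
    rw [Fin.cast_val_eq_self, add_sub_cancel, SimpleGraph.edist_comm] at this
    exact this
  rw [ddist]
  rcases min_cases (j - i).val (i - j).val with ⟨h, _⟩ | ⟨h, _⟩ <;> rw [h]
  exacts [h1, h2]

lemma edist_inl_inr (i j : Fin n) (a : Fin 1) :
    (GG n).edist (Sum.inl i) (Sum.inr (j, a)) ≤ ((ddist i j + 1 : ℕ) : ℕ∞) := by
    calc (GG n).edist (Sum.inl i) (Sum.inr (j, a))
        ≤ (GG n).edist (Sum.inl i) (Sum.inl j) + (GG n).edist (Sum.inl j) (Sum.inr (j, a)) :=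
          SimpleGraph.edist_triangle
      _ ≤ (ddist i j : ℕ∞) + 1 := by
          gcongr
          · exact edist_inl_inl hn i j
          · exact le_of_eq (edist_eq_one_iff_adj.mpr (GG_adj_pen j a))
      _ = ((ddist i j + 1 : ℕ) : ℕ∞) := by push_cast; ring

lemma edist_le_DD (u v : CV n) : (GG n).edist u v ≤ (DD u v : ℕ∞) := by
  match u, v with
  | Sum.inl i, Sum.inl j => exact edist_inl_inl hn i j
  | Sum.inl i, Sum.inr (j, a) => exact edist_inl_inr hn i j a
  | Sum.inr (i, a), Sum.inl j =>
    rw [SimpleGraph.edist_comm]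
    have := edist_inl_inr hn j i a
    simp only [DD]
    rwa [ddist_comm i j]
  | Sum.inr (i, a), Sum.inr (j, b) =>
    by_cases hij : i = j
    · subst hij
      have : a = b := Subsingleton.elim a b
      subst this
      simp [DD, SimpleGraph.edist_self]
    · simp only [DD, if_neg hij]
      calc (GG n).edist (Sum.inr (i, a)) (Sum.inr (j, b))
          ≤ (GG n).edist (Sum.inr (i, a)) (Sum.inl i) + (GG n).edist (Sum.inl i) (Sum.inr (j, b)) :=
            SimpleGraph.edist_triangle
        _ ≤ 1 + ((ddist i j + 1 : ℕ) : ℕ∞) := by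
            gcongr
            · rw [SimpleGraph.edist_comm]
              exact le_of_eq (edist_eq_one_iff_adj.mpr (GG_adj_pen i a))
            · exact edist_inl_inr hn i j b
        _ = ((ddist i j + 2 : ℕ) : ℕ∞) := by push_cast; ring

end upper

-- generic: |f u - f v| ≤ edist for 1-Lipschitz f : V → ℤ
lemma walk_lipschitz {V : Type*} (G : SimpleGraph V) (f : V → ℤ)
    (hf : ∀ a b, G.Adj a b → (f a - f b).natAbs ≤ 1) :
    ∀ {u v : V} (p : G.Walk u v), (f u - f v).natAbs ≤ p.length := by
  intro u v p
  induction p with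
  | nil => simp
  | cons h q ih =>
    rename_i a b c
    have h1 := hf a b h
    have : (f a - f c).natAbs ≤ (f a - f b).natAbs + (f b - f c).natAbs := by omega
    simp only [SimpleGraph.Walk.length_cons]
    omega

lemma natAbs_le_edist {V : Type*} (G : SimpleGraph V) (f : V → ℤ)
    (hf : ∀ a b, G.Adj a b → (f a - f b).natAbs ≤ 1) (u v : V) :
    (((f u - f v).natAbs : ℕ) : ℕ∞) ≤ G.edist u v := by
  rcases eq_or_ne (G.edist u v) ⊤ with h | h
  · rw [h]; exact le_top
  · obtain ⟨p, hp⟩ := SimpleGraph.exists_walk_of_edist_ne_top h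
    rw [← hp]
    exact_mod_cast walk_lipschitz G f hf p

def dlin {n : ℕ} (a : Fin n) : ℕ := min a.val (-a).val

section lip
variable {n : ℕ} [NeZero n] (hn : 3 ≤ n)
include hn

lemma val_one_eq : (1 : Fin n).val = 1 := by
  rw [Fin.val_one' n]
  exact Nat.mod_eq_of_lt (by omega)

lemma neg_val (a : Fin n) : (-a).val = (n - a.val) % n := by
  rfl

lemma dlin_step (a : Fin n) : ((dlin (a + 1) : ℤ) - dlin a).natAbs ≤ 1 := by
  have hk := a.isLt
  set k := a.val with hkdef
  have h1 : (a + 1).val = (k + 1) % n := by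
    rw [Fin.add_def, val_one_eq hn]
  have h2 : (-a).val = (n - k) % n := neg_val hn a
  have h3 : (-(a+1)).val = (n - (k+1) % n) % n := by
    rw [neg_val hn, h1]
  rcases eq_or_ne (k+1) n with he | hne
  · have e1 : (k+1) % n = 0 := by rw [he, Nat.mod_self]
    have e2 : (n - 0) % n = 0 := by rw [Nat.sub_zero, Nat.mod_self]
    have e3 : (n - k) % n = n - k := Nat.mod_eq_of_lt (by omega)
    simp only [dlin]
    rw [h1, h3, h2, e1, e2, e3]
    have : k = n - 1 := by omega
    simp only [this]
    omega
  · have e1 : (k+1) % n = k + 1 := Nat.mod_eq_of_lt (by omega)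
    have e3 : (n - (k+1)) % n = n - (k+1) := Nat.mod_eq_of_lt (by omega)
    rcases Nat.eq_zero_or_pos k with hz | hp
    · simp only [dlin]
      rw [h1, h3, h2, e1, hz]
      simp only [Nat.sub_zero, Nat.mod_self, e3, hz]
      omega
    · have e2 : (n - k) % n = n - k := Nat.mod_eq_of_lt (by omega)
      simp only [dlin]
      rw [h1, h3, h2, e1, e3, e2]
      omega

lemma dlin_adj (a b : Fin n) (h : (a - b).val = 1 ∨ (b - a).val = 1) :
    ((dlin a : ℤ) - dlin b).natAbs ≤ 1 := by
  have hone : ∀ x : Fin n, x.val = 1 → x = 1 := by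
    intro x hx
    apply Fin.ext
    rw [hx, val_one_eq hn]
  rcases h with h | h
  · have : a = b + 1 := by
      have := hone _ h
      rw [sub_eq_iff_eq_add] at this
      rw [this, add_comm]
    rw [this]
    exact dlin_step hn b
  · have : b = a + 1 := by
      have := hone _ h
      rw [sub_eq_iff_eq_add] at this
      rw [this, add_comm]
    rw [this]
    have := dlin_step hn a
    omega

lemma dlin_zero : dlin (0 : Fin n) = 0 := by
  simp [dlin]

end lip


section lower
variable {n : ℕ} [NeZero n] (hn : 3 ≤ n)

def FF (t : Fin n) : CV n → ℤ
  | Sum.inl x => dlin (x - t)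
  | Sum.inr (x, _) => if x = t then -1 else (dlin (x - t) : ℤ) + 1

include hn

lemma ddist_eq_dlin (i j : Fin n) : ddist i j = dlin (j - i) := by
  rw [ddist, dlin, neg_sub]

open Fin.CommRing in
lemma FF_lip (t : Fin n) : ∀ a b, (GG n).Adj a b → (FF t a - FF t b).natAbs ≤ 1 := by
  rintro a b (⟨u, v, rfl, rfl, h⟩ | ⟨u, j, rfl, rfl⟩ | ⟨u, j, rfl, rfl⟩)
  · simp only [FF]
    apply dlin_adj hn
    have h1 : (u - t) - (v - t) = u - v := by ring
    have h2 : (v - t) - (u - t) = v - u := by ring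
    rw [h1, h2]
    exact cycleGraph_adj'.mp h
  · simp only [FF]
    by_cases he : u = t
    · subst he
      rw [if_pos rfl, sub_self, dlin_zero hn]
      omega
    · rw [if_neg he]
      omega
  · simp only [FF]
    by_cases he : u = t
    · subst he
      rw [if_pos rfl, sub_self, dlin_zero hn]
      omega
    · rw [if_neg he]
      omega

lemma FF_bound (t : Fin n) (u v : CV n) :
    (((FF t u - FF t v).natAbs : ℕ) : ℕ∞) ≤ (GG n).edist u v :=
  natAbs_le_edist (GG n) (FF t) (FF_lip hn t) u v

lemma DD_le_edist (u v : CV n) (huv : u ≠ v) : (DD u v : ℕ∞) ≤ (GG n).edist u v := by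
  match u, v with
  | Sum.inl i, Sum.inl j =>
    have := FF_bound hn i (Sum.inl i) (Sum.inl j)
    simp only [FF, sub_self, dlin_zero hn] at this
    rw [← ddist_eq_dlin hn] at this
    simpa [DD] using this
  | Sum.inl i, Sum.inr (j, a) =>
    by_cases he : j = i
    · subst he
      simp only [DD, ddist_self]
      rw [show ((0+1 : ℕ) : ℕ∞) = 1 by norm_num]
      exact Order.one_le_iff_pos.mpr (SimpleGraph.edist_pos_of_ne huv)
    · have key : (FF i (Sum.inl i) - FF i (Sum.inr (j, a))).natAbs = ddist i j + 1 := by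
        simp only [FF, sub_self, dlin_zero hn, if_neg he, ddist_eq_dlin hn i j]
        omega
      have hb := FF_bound hn i (Sum.inl i) (Sum.inr (j, a))
      rw [key] at hb
      exact hb
  | Sum.inr (j, a), Sum.inl i =>
    by_cases he : j = i
    · subst he
      simp only [DD, ddist_self]
      rw [show ((0+1 : ℕ) : ℕ∞) = 1 by norm_num]
      exact Order.one_le_iff_pos.mpr (SimpleGraph.edist_pos_of_ne huv)
    · have key : (FF i (Sum.inr (j, a)) - FF i (Sum.inl i)).natAbs = ddist i j + 1 := by
        simp only [FF, sub_self, dlin_zero hn, if_neg he, ddist_eq_dlin hn i j]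
        omega
      have hb := FF_bound hn i (Sum.inr (j, a)) (Sum.inl i)
      rw [key] at hb
      simp only [DD]
      rw [ddist_comm j i]
      exact hb
  | Sum.inr (i, a), Sum.inr (j, b) =>
    have hij : i ≠ j := by
      rintro rfl
      exact huv (by rw [Subsingleton.elim a b])
    have key : (FF i (Sum.inr (i, a)) - FF i (Sum.inr (j, b))).natAbs = ddist i j + 2 := by
      simp only [FF, if_pos rfl, if_true, if_neg (Ne.symm hij), ddist_eq_dlin hn i j]
      omega
    have hb := FF_bound hn i (Sum.inr (i, a)) (Sum.inr (j, b))
    rw [key] at hb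
    simp only [DD, if_neg hij]
    exact hb

end lower

def conflictB (d : ℕ → ℕ → ℕ) (acc : List ℕ) (c : ℕ) : Bool :=
  (List.range acc.length).any fun j => (acc.getD j 0 == c) && (d j acc.length ≤ c)

def goB (d : ℕ → ℕ → ℕ) (k : ℕ) : ℕ → List ℕ → Bool
  | 0, _ => false
  | (m+1), acc => (List.range k).all fun c0 => conflictB d acc (c0+1) || goB d k m (acc ++ [c0+1])

lemma goB_sound (d : ℕ → ℕ → ℕ) (k : ℕ) :
    ∀ (m : ℕ) (acc : List ℕ), goB d k m acc = true →
    ∀ c : ℕ → ℕ, (∀ i, 1 ≤ c i ∧ c i ≤ k) →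
    (∀ i, i < acc.length → acc.getD i 0 = c i) →
    ∃ i j, i < j ∧ j < acc.length + m ∧ c i = c j ∧ d i j ≤ c i := by
  intro m
  induction m with
  | zero => intro acc h; simp [goB] at h
  | succ m ih =>
    intro acc h c hc hacc
    set L := acc.length with hL
    obtain ⟨h1, h2⟩ := hc L
    rw [goB, List.all_eq_true] at h
    have hmem : c L - 1 ∈ List.range k := by
      rw [List.mem_range]; omega
    have := h _ hmem
    have hcL : c L - 1 + 1 = c L := by omega
    rw [hcL] at this
    rcases Bool.or_eq_true_iff.mp this with hconf | hgo
    · rw [conflictB, List.any_eq_true] at hconf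
      obtain ⟨j, hjmem, hj⟩ := hconf
      rw [List.mem_range] at hjmem
      rw [Bool.and_eq_true, beq_iff_eq, decide_eq_true_eq] at hj
      refine ⟨j, L, hjmem, by omega, ?_, ?_⟩
      · rw [← hacc j hjmem, hj.1]
      · rw [← hacc j hjmem, hj.1]; exact hj.2
    · have hext : ∀ i, i < (acc ++ [c L]).length → (acc ++ [c L]).getD i 0 = c i := by
        intro i hi
        simp only [List.length_append, List.length_singleton] at hi
        rcases Nat.lt_or_ge i L with h' | h'
        · rw [List.getD_append _ _ _ _ (by omega)]; exact hacc i h'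
        · have : i = L := by omega
          subst this
          rw [List.getD_eq_getElem _ _ (by simp only [List.length_append, List.length_singleton]; omega)]
          simp [hL]
      obtain ⟨i, j, hij, hjlt, j1, j2⟩ := ih (acc ++ [c L]) hgo c hc hext
      refine ⟨i, j, hij, ?_, j1, j2⟩
      simp only [List.length_append, List.length_singleton] at hjlt
      omega

lemma packing_mono {V : Type*} (G : SimpleGraph V) (k m : ℕ) (hkm : k ≤ m) (c : V → ℕ)
    (h : IsPackingColoring G k c) : IsPackingColoring G m c :=
  ⟨fun v => ⟨(h.1 v).1, le_trans (h.1 v).2 hkm⟩, h.2⟩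

lemma packing_eq {V : Type*} (G : SimpleGraph V) (k : ℕ)
    (hup : ∃ c, IsPackingColoring G k c)
    (hlow : ∀ c, ¬ IsPackingColoring G (k-1) c) :
    packingChromaticNumber G = k := by
  apply le_antisymm
  · exact Nat.sInf_le hup
  · by_contra h
    push_neg at h
    have hmem : packingChromaticNumber G ∈ {m | ∃ c, IsPackingColoring G m c} :=
      Nat.sInf_mem (Set.nonempty_of_mem hup)
    obtain ⟨c, hc⟩ := hmem
    exact hlow c (packing_mono _ _ _ (by omega) c hc)

section frame
variable {n : ℕ} [NeZero n] (hn : 3 ≤ n)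
include hn

lemma exists_coloring_of_DD (k : ℕ) (c : CV n → ℕ)
    (hb : ∀ v, 1 ≤ c v ∧ c v ≤ k)
    (hp : ∀ u v : CV n, u ≠ v → c u = c v → c u < DD u v) :
    ∃ c', IsPackingColoring (GG n) k c' := by
  refine ⟨c, hb, fun u v huv hcc => ?_⟩
  calc (c u : ℕ∞) < (DD u v : ℕ∞) := by exact_mod_cast hp u v huv hcc
    _ ≤ _ := DD_le_edist hn u v huv

lemma no_coloring_of_search (k N : ℕ) (e : ℕ → CV n) (d : ℕ → ℕ → ℕ)
    (hinj : ∀ i < N, ∀ j < N, i < j → e i ≠ e j)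
    (hd : ∀ i < N, ∀ j < N, i < j → DD (e i) (e j) ≤ d i j)
    (hgo : goB d k N [] = true) :
    ∀ c, ¬ IsPackingColoring (GG n) k c := by
  intro c hc
  have hk : 1 ≤ k := le_trans (hc.1 (Sum.inl ⟨0, by omega⟩)).1 (hc.1 (Sum.inl ⟨0, by omega⟩)).2
  set c' : ℕ → ℕ := fun m => if m < N then c (e m) else 1 with hc'def
  have hcb : ∀ i, 1 ≤ c' i ∧ c' i ≤ k := by
    intro i
    by_cases hi : i < N
    · simp only [hc'def, if_pos hi]
      exact hc.1 (e i)
    · simp only [hc'def, if_neg hi]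
      omega
  obtain ⟨i, j, hij, hjN, hcc, hdle⟩ :=
    goB_sound d k N [] hgo c' hcb (by intro i hi; simp at hi)
  simp only [List.length_nil, Nat.zero_add] at hjN
  have hiN : i < N := by omega
  simp only [hc'def, if_pos hiN, if_pos hjN] at hcc hdle
  have hne := hinj i hiN j hjN hij
  have hlt := hc.2 (e i) (e j) hne hcc
  have hchain : (GG n).edist (e i) (e j) ≤ (c (e i) : ℕ∞) := by
    calc (GG n).edist (e i) (e j) ≤ (DD (e i) (e j) : ℕ∞) := edist_le_DD hn _ _
      _ ≤ (c (e i) : ℕ∞) := by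
          have := hd i hiN j hjN hij
          exact_mod_cast le_trans (Nat.cast_le.mpr this) (Nat.cast_le.mpr hdle)
  exact absurd (lt_of_lt_of_le hlt hchain) (lt_irrefl _)

end frame

-- concrete machinery
def vertI (n : ℕ) [NeZero n] (m : ℕ) : CV n :=
  if m % 2 = 0 then Sum.inl ⟨m / 2 % n, Nat.mod_lt _ (Nat.pos_of_ne_zero (NeZero.ne n))⟩
  else Sum.inr (⟨m / 2 % n, Nat.mod_lt _ (Nat.pos_of_ne_zero (NeZero.ne n))⟩, 0)

def cycN (n i j : ℕ) : ℕ := min ((n + j - i) % n) ((n + i - j) % n)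
def dmat (n a b : ℕ) : ℕ := if a / 2 = b / 2 then 1 else cycN n (a/2) (b/2) + a % 2 + b % 2
def dwin (a b : ℕ) : ℕ := if a / 2 = b / 2 then 1 else (b/2 - a/2) + a % 2 + b % 2

def colorOf {n : ℕ} (L : List ℕ) : CV n → ℕ
  | Sum.inl i => L.getD (2 * i.val) 0
  | Sum.inr (i, _) => L.getD (2 * i.val + 1) 0

lemma ddist_le_diff {n : ℕ} (a b : ℕ) (hab : a ≤ b) (hb : b < n) :
    ddist (⟨a, by omega⟩ : Fin n) ⟨b, hb⟩ ≤ b - a := by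
  rw [ddist]
  apply le_trans (min_le_left _ _)
  rw [Fin.sub_def]
  simp only
  have h1 : n - a + b = (b - a) + n := by omega
  rw [h1, Nat.add_mod_right]
  exact le_of_eq (Nat.mod_eq_of_lt (by omega))

lemma no4_of_big {n : ℕ} [NeZero n] (hn : 10 ≤ n) : ∀ c, ¬ IsPackingColoring (GG n) 4 c := by
  have h3 : 3 ≤ n := by omega
  apply no_coloring_of_search h3 4 20 (vertI n) dwin
  · intro i hi j hj hij
    have e1 : i / 2 % n = i / 2 := Nat.mod_eq_of_lt (by omega)
    have e2 : j / 2 % n = j / 2 := Nat.mod_eq_of_lt (by omega)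
    simp only [vertI, e1, e2]
    split_ifs with p1 p2 p2 <;> simp only [ne_eq, Sum.inl.injEq, Sum.inr.injEq,
      Fin.mk.injEq, Prod.mk.injEq, not_and, reduceCtorEq, not_false_eq_true] <;>
      first
      | trivial
      | (intro h; omega)
      | (intro h _; omega)
  · intro i hi j hj hij
    have e1 : i / 2 % n = i / 2 := Nat.mod_eq_of_lt (by omega)
    have e2 : j / 2 % n = j / 2 := Nat.mod_eq_of_lt (by omega)
    by_cases hsame : i / 2 = j / 2
    · have hp : i % 2 = 0 ∧ j % 2 = 1 := by omega
      simp only [vertI, e1, e2, hp.1, hp.2, if_pos, if_neg (by omega : ¬ (1:ℕ) = 0),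
        reduceIte, dwin, hsame, DD, ddist_self]
      omega
    · have hlt : i / 2 < j / 2 := by omega
      have hdd : ddist (⟨i/2, by omega⟩ : Fin n) ⟨j/2, by omega⟩ ≤ j/2 - i/2 :=
        ddist_le_diff (i/2) (j/2) (by omega) (by omega)
      have hne : (⟨i/2, by omega⟩ : Fin n) ≠ ⟨j/2, by omega⟩ := by
        simp only [ne_eq, Fin.mk.injEq]
        omega
      rcases Nat.mod_two_eq_zero_or_one i with pi | pi <;>
        rcases Nat.mod_two_eq_zero_or_one j with pj | pj <;>
        simp only [vertI, e1, e2, pi, pj, reduceIte, if_neg (by omega : ¬ (1:ℕ) = 0),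
          DD, if_neg hne, dwin, if_neg hsame] <;> omega
  · decide

-- tables for the general construction
def PT : ℕ → ℕ × ℕ
  | 0 => (1,4) | 1 => (2,1) | 2 => (1,5) | _ => (3,1)

def QL : List (List (ℕ × ℕ)) :=
  [[(1,2),(4,1),(1,2),(3,1),(1,2),(5,1),(1,2),(3,1),(1,4),(2,1),(1,5),(3,1)],
   [(2,1),(1,3),(5,1),(1,2),(3,1),(1,2),(4,1),(1,3),(2,1),(5,1),(1,2),(3,1)],
   [(1,3),(5,1),(1,2),(3,1),(1,2),(4,1),(1,2),(3,1),(1,2),(5,1),(1,2),(3,1)],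
   [(3,1),(1,2),(4,1),(1,2),(3,1),(1,5),(2,1),(1,3),(4,1),(1,5),(2,1),(3,1)]]

def QT (r t : ℕ) : ℕ × ℕ := (QL.getD r []).getD t (0,0)

def STab (r p : ℕ) : ℕ × ℕ :=
  if p < 6 then PT ((r + 2 + p) % 4)
  else if p < 18 then QT r (p - 6)
  else PT ((p - 18) % 4)

def colF (n i : ℕ) : ℕ × ℕ := if i + 12 < n then PT (i % 4) else QT (n % 4) (i - (n - 12))

def cGen {n : ℕ} : CV n → ℕ
  | Sum.inl i => (colF n i.val).1
  | Sum.inr (i, _) => (colF n i.val).2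

def OKp (x y : ℕ × ℕ) (t : ℕ) : Prop :=
  (t = 0 → x.1 ≠ x.2) ∧
  (1 ≤ t → (x.1 = y.1 → x.1 < t) ∧ (x.1 = y.2 → x.1 < t + 1) ∧
           (x.2 = y.1 → x.2 < t + 1) ∧ (x.2 = y.2 → x.2 < t + 2))

instance OKp.dec (x y : ℕ × ℕ) (t : ℕ) : Decidable (OKp x y t) := by
  unfold OKp
  infer_instance

lemma fact_P : ∀ a < 4, ∀ t ≤ 5, OKp (PT a) (PT ((a + t) % 4)) t := by decide
lemma fact_S : ∀ r < 4, ∀ s < 18, ∀ t ≤ 5, OKp (STab r s) (STab r (s + t)) t := by decide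
lemma fact_Pb : ∀ a < 4, 1 ≤ (PT a).1 ∧ (PT a).1 ≤ 5 ∧ 1 ≤ (PT a).2 ∧ (PT a).2 ≤ 5 := by decide
lemma fact_Qb : ∀ r < 4, ∀ t < 12,
    1 ≤ (QT r t).1 ∧ (QT r t).1 ≤ 5 ∧ 1 ≤ (QT r t).2 ∧ (QT r t).2 ≤ 5 := by decide

lemma colF_bounds {n i : ℕ} (hn : 18 ≤ n) (hi : i < n) :
    1 ≤ (colF n i).1 ∧ (colF n i).1 ≤ 5 ∧ 1 ≤ (colF n i).2 ∧ (colF n i).2 ≤ 5 := by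
  rw [colF]
  split_ifs with h
  · exact fact_Pb (i % 4) (by omega)
  · exact fact_Qb (n % 4) (by omega) (i - (n - 12)) (by omega)

lemma main_pairs {n : ℕ} (hn : 18 ≤ n) (m : ℕ) (hm : m < n) (t : ℕ) (ht : t ≤ 5) :
    OKp (colF n m) (colF n ((m + t) % n)) t := by
  by_cases hcase : m + 18 ≤ n
  · have e0 : colF n m = PT (m % 4) := by rw [colF, if_pos (by omega)]
    have e1 : (m + t) % n = m + t := Nat.mod_eq_of_lt (by omega)
    have e2 : colF n (m + t) = PT ((m + t) % 4) := by rw [colF, if_pos (by omega)]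
    have e3 : (m + t) % 4 = (m % 4 + t) % 4 := by omega
    rw [e0, e1, e2, e3]
    exact fact_P (m % 4) (by omega) t ht
  · have key : ∀ j ≤ 5, colF n ((m + j) % n) = STab (n % 4) ((m - (n - 18)) + j) := by
      intro j hj
      by_cases h1 : m + j < n
      · have e1 : (m + j) % n = m + j := Nat.mod_eq_of_lt h1
        rw [e1]
        by_cases h2 : m + j + 12 < n
        · rw [colF, if_pos h2, STab, if_pos (by omega)]
          have e3 : (m + j) % 4 = (n % 4 + 2 + ((m - (n - 18)) + j)) % 4 := by omega
          rw [e3]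
        · rw [colF, if_neg h2, STab, if_neg (by omega), if_pos (by omega)]
          congr 1
          omega
      · have e1 : (m + j) % n = m + j - n := by
          rw [Nat.mod_eq_sub_mod (by omega)]
          exact Nat.mod_eq_of_lt (by omega)
        rw [e1, colF, if_pos (by omega), STab, if_neg (by omega), if_neg (by omega)]
        exact congrArg PT (by omega)
    have k0 := key 0 (by omega)
    have kt := key t ht
    rw [Nat.add_zero, Nat.mod_eq_of_lt hm] at k0
    rw [k0, kt]
    exact fact_S (n % 4) (by omega) (m - (n - 18)) (by omega) t ht

section genupper
variable {n : ℕ} [NeZero n] (hn : 18 ≤ n)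
include hn

lemma val_mod_eq {i j : Fin n} {t : ℕ} (ht : t < n) (hv : (j - i).val = t) :
    j.val = (i.val + t) % n := by
  have ha := i.isLt
  have hb := j.isLt
  rw [Fin.sub_def] at hv
  simp only at hv
  rcases Nat.lt_or_ge (n - i.val + j.val) n with h | h
  · rw [Nat.mod_eq_of_lt h] at hv
    have h2 : (i.val + t) % n = i.val + t - n := by
      rw [Nat.mod_eq_sub_mod (by omega)]
      exact Nat.mod_eq_of_lt (by omega)
    omega
  · have h1 : (n - i.val + j.val) % n = n - i.val + j.val - n := by
      rw [Nat.mod_eq_sub_mod (by omega)]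
      exact Nat.mod_eq_of_lt (by omega)
    rw [h1] at hv
    rw [Nat.mod_eq_of_lt (by omega)]
    omega

lemma ddist_zero_eq {i j : Fin n} (h : ddist i j = 0) : i = j := by
  rw [ddist] at h
  have h2 : (j - i).val = 0 ∨ (i - j).val = 0 := by omega
  rcases h2 with h2 | h2
  · have h3 : j - i = 0 := Fin.ext (by simpa using h2)
    exact (sub_eq_zero.mp h3).symm
  · have h3 : i - j = 0 := Fin.ext (by simpa using h2)
    exact sub_eq_zero.mp h3

lemma horient (i j : Fin n) (t : ℕ) (ht : t ≤ 5) (hv : (j - i).val = t) :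
    OKp (colF n i.val) (colF n j.val) t := by
  have hjv : j.val = (i.val + t) % n := val_mod_eq hn (by omega) hv
  have hmp := main_pairs (by omega : 18 ≤ n) i.val i.isLt t ht
  rwa [← hjv] at hmp

lemma ddist_dichotomy (i j : Fin n) :
    ddist i j = (j - i).val ∨ ddist i j = (i - j).val := by
  rw [ddist]; omega

lemma cGen_bound (u : CV n) : 1 ≤ cGen u ∧ cGen u ≤ 5 := by
  match u with
  | Sum.inl i =>
    have := colF_bounds (n := n) (i := i.val) (by omega) i.isLt
    exact ⟨this.1, this.2.1⟩
  | Sum.inr (i, _) =>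
    have := colF_bounds (n := n) (i := i.val) (by omega) i.isLt
    exact ⟨this.2.2.1, this.2.2.2⟩

lemma cGen_pairs : ∀ u v : CV n, u ≠ v → cGen u = cGen v → cGen u < DD u v := by
  have hOK0 : ∀ i : Fin n, OKp (colF n i.val) (colF n i.val) 0 := by
    intro i
    have : (i - i).val = 0 := by
      have h : i - i = 0 := sub_self i
      simp [h]
    exact horient hn i i 0 (by omega) this
  intro u v huv hcc
  match u, v with
  | Sum.inl i, Sum.inl j =>
    have hij : i ≠ j := fun h => huv (by rw [h])
    simp only [cGen] at hcc ⊢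
    simp only [DD]
    set t := ddist i j with htdef
    have ht1 : 1 ≤ t := by
      rcases Nat.eq_zero_or_pos t with h | h
      · exact absurd (ddist_zero_eq hn (htdef ▸ h)) hij
      · exact h
    by_cases ht5 : t ≤ 5
    · rcases ddist_dichotomy hn i j with hA | hB
      · exact ((horient hn i j t ht5 hA.symm).2 ht1).1 hcc
      · have h2 := ((horient hn j i t ht5 hB.symm).2 ht1).1 hcc.symm
        omega
    · have := (cGen_bound hn (Sum.inl i)).2
      simp only [cGen] at this
      omega
  | Sum.inl i, Sum.inr (j, b) =>
    simp only [cGen] at hcc ⊢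
    simp only [DD]
    by_cases hij : i = j
    · subst hij
      exact absurd hcc ((hOK0 i).1 rfl)
    · set t := ddist i j with htdef
      have ht1 : 1 ≤ t := by
        rcases Nat.eq_zero_or_pos t with h | h
        · exact absurd (ddist_zero_eq hn (htdef ▸ h)) hij
        · exact h
      by_cases ht5 : t ≤ 5
      · rcases ddist_dichotomy hn i j with hA | hB
        · exact ((horient hn i j t ht5 hA.symm).2 ht1).2.1 hcc
        · have h2 := ((horient hn j i t ht5 hB.symm).2 ht1).2.2.1 hcc.symm
          omega
      · have := (cGen_bound hn (Sum.inl i)).2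
        simp only [cGen] at this
        omega
  | Sum.inr (j, b), Sum.inl i =>
    simp only [cGen] at hcc ⊢
    simp only [DD]
    by_cases hij : j = i
    · subst hij
      exact absurd hcc.symm ((hOK0 j).1 rfl)
    · set t := ddist j i with htdef
      have ht1 : 1 ≤ t := by
        rcases Nat.eq_zero_or_pos t with h | h
        · exact absurd (ddist_zero_eq hn (htdef ▸ h)) hij
        · exact h
      by_cases ht5 : t ≤ 5
      · rcases ddist_dichotomy hn j i with hA | hB
        · exact ((horient hn j i t ht5 hA.symm).2 ht1).2.2.1 hcc
        · have h2 := ((horient hn i j t ht5 hB.symm).2 ht1).2.1 hcc.symm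
          omega
      · have := (cGen_bound hn (Sum.inr (j, b))).2
        simp only [cGen] at this
        omega
  | Sum.inr (i, a), Sum.inr (j, b) =>
    have hij : i ≠ j := by
      rintro rfl
      exact huv (by rw [Subsingleton.elim a b])
    simp only [cGen] at hcc ⊢
    simp only [DD, if_neg hij]
    set t := ddist i j with htdef
    have ht1 : 1 ≤ t := by
      rcases Nat.eq_zero_or_pos t with h | h
      · exact absurd (ddist_zero_eq hn (htdef ▸ h)) hij
      · exact h
    by_cases ht5 : t ≤ 5
    · rcases ddist_dichotomy hn i j with hA | hB
      · exact ((horient hn i j t ht5 hA.symm).2 ht1).2.2.2 hcc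
      · have h2 := ((horient hn j i t ht5 hB.symm).2 ht1).2.2.2 hcc.symm
        omega
    · have := (cGen_bound hn (Sum.inr (i, a))).2
      simp only [cGen] at this
      omega

end genupper

lemma exists5_of_big {n : ℕ} [NeZero n] (hn : 18 ≤ n) : ∃ c, IsPackingColoring (GG n) 5 c :=
  exists_coloring_of_DD (by omega) 5 cGen (fun v => cGen_bound hn v) (cGen_pairs hn)

lemma up3 : ∃ c', IsPackingColoring (GG 3) 4 c' := by
  apply exists_coloring_of_DD (by omega : (3:ℕ) ≤ 3) 4 (colorOf [1, 2, 3, 1, 4, 1])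
  · decide
  · decide

lemma up4 : ∃ c', IsPackingColoring (GG 4) 4 c' := by
  apply exists_coloring_of_DD (by omega : (3:ℕ) ≤ 4) 4 (colorOf [1, 2, 3, 1, 1, 2, 4, 1])
  · decide
  · decide

lemma up5 : ∃ c', IsPackingColoring (GG 5) 5 c' := by
  apply exists_coloring_of_DD (by omega : (3:ℕ) ≤ 5) 5 (colorOf [1, 2, 3, 1, 1, 2, 4, 1, 5, 1])
  · decide
  · decide

lemma up6 : ∃ c', IsPackingColoring (GG 6) 5 c' := by
  apply exists_coloring_of_DD (by omega : (3:ℕ) ≤ 6) 5 (colorOf [1, 2, 3, 1, 1, 2, 4, 1, 1, 2, 5, 1])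
  · decide
  · decide

lemma up7 : ∃ c', IsPackingColoring (GG 7) 5 c' := by
  apply exists_coloring_of_DD (by omega : (3:ℕ) ≤ 7) 5 (colorOf [1, 2, 3, 1, 1, 2, 4, 1, 1, 3, 2, 1, 5, 1])
  · decide
  · decide

lemma up8 : ∃ c', IsPackingColoring (GG 8) 5 c' := by
  apply exists_coloring_of_DD (by omega : (3:ℕ) ≤ 8) 5 (colorOf [1, 2, 3, 1, 1, 2, 4, 1, 1, 2, 3, 1, 1, 2, 5, 1])
  · decide
  · decide

lemma up9 : ∃ c', IsPackingColoring (GG 9) 5 c' := by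
  apply exists_coloring_of_DD (by omega : (3:ℕ) ≤ 9) 5 (colorOf [1, 2, 3, 1, 1, 2, 4, 1, 1, 2, 3, 1, 2, 1, 1, 4, 5, 1])
  · decide
  · decide

lemma up10 : ∃ c', IsPackingColoring (GG 10) 5 c' := by
  apply exists_coloring_of_DD (by omega : (3:ℕ) ≤ 10) 5 (colorOf [1, 2, 3, 1, 1, 2, 4, 1, 1, 5, 2, 1, 3, 1, 1, 2, 4, 1, 5, 1])
  · decide
  · decide

lemma up11 : ∃ c', IsPackingColoring (GG 11) 5 c' := by
  apply exists_coloring_of_DD (by omega : (3:ℕ) ≤ 11) 5 (colorOf [1, 2, 3, 1, 1, 2, 4, 1, 1, 5, 2, 1, 3, 1, 1, 2, 4, 1, 1, 2, 5, 1])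
  · decide
  · decide

lemma up12 : ∃ c', IsPackingColoring (GG 12) 5 c' := by
  apply exists_coloring_of_DD (by omega : (3:ℕ) ≤ 12) 5 (colorOf [1, 2, 3, 1, 1, 2, 4, 1, 1, 2, 3, 1, 1, 5, 2, 1, 1, 3, 4, 1, 1, 2, 5, 1])
  · decide
  · decide

lemma up13 : ∃ c', IsPackingColoring (GG 13) 5 c' := by
  apply exists_coloring_of_DD (by omega : (3:ℕ) ≤ 13) 5 (colorOf [1, 2, 3, 1, 1, 2, 4, 1, 1, 2, 3, 1, 1, 5, 2, 1, 1, 3, 4, 1, 1, 3, 2, 1, 5, 1])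
  · decide
  · decide

lemma up14 : ∃ c', IsPackingColoring (GG 14) 5 c' := by
  apply exists_coloring_of_DD (by omega : (3:ℕ) ≤ 14) 5 (colorOf [1, 2, 3, 1, 1, 2, 4, 1, 1, 2, 3, 1, 1, 2, 5, 1, 1, 2, 3, 1, 1, 2, 4, 1, 1, 2, 5, 1])
  · decide
  · decide

lemma up15 : ∃ c', IsPackingColoring (GG 15) 5 c' := by
  apply exists_coloring_of_DD (by omega : (3:ℕ) ≤ 15) 5 (colorOf [1, 2, 3, 1, 1, 2, 4, 1, 1, 2, 3, 1, 1, 2, 5, 1, 1, 2, 3, 1, 1, 2, 4, 1, 1, 3, 2, 1, 5, 1])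
  · decide
  · decide

lemma up16 : ∃ c', IsPackingColoring (GG 16) 5 c' := by
  apply exists_coloring_of_DD (by omega : (3:ℕ) ≤ 16) 5 (colorOf [1, 2, 3, 1, 1, 2, 4, 1, 1, 2, 3, 1, 1, 2, 5, 1, 1, 2, 3, 1, 1, 2, 4, 1, 1, 2, 3, 1, 1, 2, 5, 1])
  · decide
  · decide

lemma up17 : ∃ c', IsPackingColoring (GG 17) 5 c' := by
  apply exists_coloring_of_DD (by omega : (3:ℕ) ≤ 17) 5 (colorOf [1, 2, 3, 1, 1, 2, 4, 1, 1, 2, 3, 1, 1, 2, 5, 1, 1, 2, 3, 1, 1, 2, 4, 1, 1, 2, 3, 1, 2, 1, 1, 4, 5, 1])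
  · decide
  · decide

lemma low3 : ∀ c, ¬ IsPackingColoring (GG 3) 3 c := by
  apply no_coloring_of_search (by omega : (3:ℕ) ≤ 3) 3 6 (vertI 3) (dmat 3)
  · decide
  · decide
  · decide

lemma low4 : ∀ c, ¬ IsPackingColoring (GG 4) 3 c := by
  apply no_coloring_of_search (by omega : (3:ℕ) ≤ 4) 3 8 (vertI 4) (dmat 4)
  · decide
  · decide
  · decide

lemma low5 : ∀ c, ¬ IsPackingColoring (GG 5) 4 c := by
  apply no_coloring_of_search (by omega : (3:ℕ) ≤ 5) 4 10 (vertI 5) (dmat 5)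
  · decide
  · decide
  · decide

lemma low6 : ∀ c, ¬ IsPackingColoring (GG 6) 4 c := by
  apply no_coloring_of_search (by omega : (3:ℕ) ≤ 6) 4 12 (vertI 6) (dmat 6)
  · decide
  · decide
  · decide

lemma low7 : ∀ c, ¬ IsPackingColoring (GG 7) 4 c := by
  apply no_coloring_of_search (by omega : (3:ℕ) ≤ 7) 4 14 (vertI 7) (dmat 7)
  · decide
  · decide
  · decide

lemma low8 : ∀ c, ¬ IsPackingColoring (GG 8) 4 c := by
  apply no_coloring_of_search (by omega : (3:ℕ) ≤ 8) 4 16 (vertI 8) (dmat 8)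
  · decide
  · decide
  · decide

lemma low9 : ∀ c, ¬ IsPackingColoring (GG 9) 4 c := by
  apply no_coloring_of_search (by omega : (3:ℕ) ≤ 9) 4 18 (vertI 9) (dmat 9)
  · decide
  · decide
  · decide

theorem packing_chromatic_corona_cycle (n : ℕ) (hn : 3 ≤ n) :
    ((n = 3 ∨ n = 4) → packingChromaticNumber (genCorona (cycleGraph n) 1) = 4) ∧
    (5 ≤ n → packingChromaticNumber (genCorona (cycleGraph n) 1) = 5) := by
  haveI : NeZero n := ⟨by omega⟩
  constructor
  · rintro (rfl | rfl)
    · exact packing_eq (GG 3) 4 up3 low3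
    · exact packing_eq (GG 4) 4 up4 low4
  · intro h5
    rcases le_or_gt 18 n with hbig | hsmall
    · exact packing_eq (GG n) 5 (exists5_of_big hbig) (no4_of_big (by omega))
    · interval_cases n
      · exact packing_eq (GG 5) 5 up5 low5
      · exact packing_eq (GG 6) 5 up6 low6
      · exact packing_eq (GG 7) 5 up7 low7
      · exact packing_eq (GG 8) 5 up8 low8
      · exact packing_eq (GG 9) 5 up9 low9
      · exact packing_eq (GG 10) 5 up10 (no4_of_big (by omega))
      · exact packing_eq (GG 11) 5 up11 (no4_of_big (by omega))
      · exact packing_eq (GG 12) 5 up12 (no4_of_big (by omega))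
      · exact packing_eq (GG 13) 5 up13 (no4_of_big (by omega))
      · exact packing_eq (GG 14) 5 up14 (no4_of_big (by omega))
      · exact packing_eq (GG 15) 5 up15 (no4_of_big (by omega))
      · exact packing_eq (GG 16) 5 up16 (no4_of_big (by omega))
      · exact packing_eq (GG 17) 5 up17 (no4_of_big (by omega))
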